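/- Let φ : ℤ^ℓ → ℤ^ℓ be a ℤ-linear map with matrix A. Then the function q ↦ #ker(φ_q) (cardinality of the kernel of the induced map on (ℤ/qℤ)^ℓ) is a quasi-polynomial in q whose constituents depend on the residue r of q modulo e_r only through gcd(e_r, q), where e_r is the largest elementary divisor of A; in particular #ker(φ_q) depends on q only through gcd(e_r, q) and q itself via the monomial factor q^{ℓ−rank A}. -/

import Mathlib

lemma card_ker_single (q : ℕ) (hq : 0 < q) (c : ℤ) :
    Nat.card {y : ZMod q // y * (c : ZMod q) = 0} = Int.gcd c (q : ℤ) := by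
  haveI : NeZero q := ⟨hq.ne'⟩
  set f : ZMod q →+ ZMod q := AddMonoidHom.mulRight ((c : ZMod q)) with hf
  have hrange : f.range = AddSubgroup.zmultiples ((c : ℤ) : ZMod q) := by
    ext x
    constructor
    · rintro ⟨y, rfl⟩
      exact ⟨(y.cast : ℤ), by simp [f, zsmul_eq_mul, ZMod.intCast_zmod_cast]⟩
    · rintro ⟨n, rfl⟩
      exact ⟨((n : ℤ) : ZMod q), by simp [f, zsmul_eq_mul]⟩
  have hgcd : Int.gcd c (q : ℤ) = Nat.gcd q c.natAbs := by
    simp [Int.gcd, Nat.gcd_comm]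
  have hord : addOrderOf ((c : ℤ) : ZMod q) = q / Int.gcd c (q : ℤ) := by
    have hcast : ((c : ℤ) : ZMod q) = (c.natAbs : ZMod q) ∨
        ((c : ℤ) : ZMod q) = -(c.natAbs : ZMod q) := by
      rcases Int.natAbs_eq c with h | h
      · left; rw [← Int.cast_natCast (R := ZMod q), ← h]
      · right; rw [← Int.cast_natCast (R := ZMod q), ← Int.cast_neg, ← h]
    rcases hcast with h | h
    · rw [h, ZMod.addOrderOf_coe _ hq.ne', hgcd]
    · rw [h, addOrderOf_neg, ZMod.addOrderOf_coe _ hq.ne', hgcd]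
  have hcardrange : Nat.card f.range = q / Int.gcd c (q : ℤ) := by
    rw [hrange, Nat.card_zmultiples, hord]
  have hsplit : Nat.card (ZMod q) = Nat.card (ZMod q ⧸ f.ker) * Nat.card f.ker :=
    AddSubgroup.card_eq_card_quotient_mul_card_addSubgroup f.ker
  have hquot : Nat.card (ZMod q ⧸ f.ker) = Nat.card f.range :=
    Nat.card_congr (QuotientAddGroup.quotientKerEquivRange f).toEquiv
  have hg : Int.gcd c (q : ℤ) ∣ q := Nat.gcd_dvd_right _ _
  have hq' : Nat.card (ZMod q) = q := by simp [Nat.card_eq_fintype_card, ZMod.card]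
  have hkcard : Nat.card f.ker = Int.gcd c (q : ℤ) := by
    have hgpos : 0 < Int.gcd c (q : ℤ) := Nat.pos_of_dvd_of_pos hg hq
    have hqg : 0 < q / Int.gcd c (q : ℤ) := Nat.div_pos (Nat.le_of_dvd hq hg) hgpos
    have hthis := hsplit
    rw [hq', hquot, hcardrange] at hthis
    have hfq : (q / Int.gcd c (q : ℤ)) * Int.gcd c (q : ℤ) = q := Nat.div_mul_cancel hg
    exact Nat.eq_of_mul_eq_mul_left hqg ((hfq.trans hthis).symm)
  rw [← hkcard]
  exact Nat.card_congr (Equiv.subtypeEquivRight (by intro x; simp [f, AddMonoidHom.mem_ker]))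

lemma card_ker_diagonal (ℓ : ℕ) (q : ℕ) (hq : 0 < q) (dd : Fin ℓ → ℤ) :
    Nat.card {x : Fin ℓ → ZMod q //
        Matrix.vecMul x ((Matrix.diagonal dd).map (Int.cast : ℤ → ZMod q)) = 0} =
      ∏ i : Fin ℓ, Int.gcd (dd i) (q : ℤ) := by
  have hmap : (Matrix.diagonal dd).map (Int.cast : ℤ → ZMod q) =
      Matrix.diagonal (fun i => ((dd i : ℤ) : ZMod q)) := Matrix.diagonal_map (by simp)
  have he : {x : Fin ℓ → ZMod q //
        Matrix.vecMul x ((Matrix.diagonal dd).map (Int.cast : ℤ → ZMod q)) = 0} ≃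
      ∀ i : Fin ℓ, {y : ZMod q // y * ((dd i : ℤ) : ZMod q) = 0} := by
    refine (Equiv.subtypeEquivRight ?_).trans (Equiv.subtypePiEquivPi)
    intro x
    rw [hmap, funext_iff]
    refine forall_congr' fun i => ?_
    rw [Matrix.vecMul_diagonal]
    simp
  rw [Nat.card_congr he, Nat.card_pi]
  exact Finset.prod_congr rfl fun i _ => card_ker_single q hq (dd i)

lemma vecMul_ker_zero (ℓ q : ℕ) (M : Matrix (Fin ℓ) (Fin ℓ) (ZMod q))
    (hM : IsUnit M.det) (v : Fin ℓ → ZMod q) (hv : Matrix.vecMul v M = 0) : v = 0 := by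
  have := congrArg (fun y => Matrix.vecMul y M⁻¹) hv
  simpa [Matrix.vecMul_vecMul, Matrix.mul_nonsing_inv M hM] using this

lemma card_ker_unimodular (ℓ : ℕ) (q : ℕ) (A S T : Matrix (Fin ℓ) (Fin ℓ) ℤ)
    (hS : IsUnit S.det) (hT : IsUnit T.det) :
    Nat.card {x : Fin ℓ → ZMod q //
        Matrix.vecMul x (((S * A * T)).map (Int.cast : ℤ → ZMod q)) = 0} =
      Nat.card {x : Fin ℓ → ZMod q //
        Matrix.vecMul x (A.map (Int.cast : ℤ → ZMod q)) = 0} := by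
  have hfc : ⇑(Int.castRingHom (ZMod q)) = (Int.cast : ℤ → ZMod q) := rfl
  have hdet : ∀ M : Matrix (Fin ℓ) (Fin ℓ) ℤ, IsUnit M.det →
      IsUnit (M.map (Int.cast : ℤ → ZMod q)).det := by
    intro M hM
    rw [← hfc, ← RingHom.mapMatrix_apply, ← RingHom.map_det]
    exact hM.map _
  have hS' := hdet S hS
  have hT' := hdet T hT
  have hmul : ((S * A * T)).map (Int.cast : ℤ → ZMod q) =
      S.map (Int.cast : ℤ → ZMod q) * A.map (Int.cast : ℤ → ZMod q)
        * T.map (Int.cast : ℤ → ZMod q) := by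
    rw [← hfc, Matrix.map_mul, Matrix.map_mul]
  set S' := S.map (Int.cast : ℤ → ZMod q)
  set T' := T.map (Int.cast : ℤ → ZMod q)
  set A' := A.map (Int.cast : ℤ → ZMod q)
  refine Nat.card_congr (Equiv.subtypeEquiv
    (Equiv.ofBijective (fun x => Matrix.vecMul x S') ?_) fun x => ?_)
  · constructor
    · intro a b hab
      have h0 : Matrix.vecMul (a - b) S' = 0 := by
        rw [Matrix.sub_vecMul]
        simp only at hab
        rw [hab, sub_self]
      have := vecMul_ker_zero ℓ q S' hS' _ h0
      exact sub_eq_zero.mp this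
    · intro y
      exact ⟨Matrix.vecMul y (S'⁻¹), by
        simp [Matrix.vecMul_vecMul, Matrix.nonsing_inv_mul S' hS']⟩
  · simp only [Equiv.ofBijective_apply, hmul, ← Matrix.vecMul_vecMul]
    constructor
    · intro h
      exact vecMul_ker_zero ℓ q T' hT' _ h
    · intro h
      rw [show Matrix.vecMul (Matrix.vecMul x S') A' = 0 from h]
      simp

/-- Cardinality of the kernel of the map on `(ℤ/qℤ)^ℓ` induced by the integer
matrix `A` (acting by right multiplication on row vectors). -/
noncomputable def kerCard {ℓ : ℕ} (A : Matrix (Fin ℓ) (Fin ℓ) ℤ) (q : ℕ) : ℕ :=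
  Nat.card {x : Fin ℓ → ZMod q // Matrix.vecMul x (A.map (Int.cast : ℤ → ZMod q)) = 0}

/-- `q ↦ #ker(φ_q)` is a quasi-polynomial in `q` whose constituents
depend on `q` only through `gcd(er, q)`, where `er` is the largest elementary
divisor of `A` (equal to `1` when `rank A = 0`); moreover each constituent is the
monomial `(∏_j gcd(e_j, q)) · q^(ℓ - rank A)`, so `#ker(φ_q)` depends only on
`gcd(er, q)` and the monomial factor `q^(ℓ - rank A)`. -/
theorem stmt1 (ℓ r : ℕ) (hr : r ≤ ℓ) (A : Matrix (Fin ℓ) (Fin ℓ) ℤ)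
    (S T : Matrix (Fin ℓ) (Fin ℓ) ℤ) (hS : IsUnit S.det) (hT : IsUnit T.det)
    (dd : Fin ℓ → ℤ)
    (hSNF : S * A * T = Matrix.diagonal dd)
    (hpos : ∀ i : Fin ℓ, (i : ℕ) < r → 0 < dd i)
    (hzero : ∀ i : Fin ℓ, r ≤ (i : ℕ) → dd i = 0)
    (hdvd : ∀ i j : Fin ℓ, i ≤ j → (j : ℕ) < r → dd i ∣ dd j)
    (er : ℕ)
    (her : (r = 0 ∧ er = 1) ∨ ∃ i : Fin ℓ, (i : ℕ) + 1 = r ∧ (er : ℤ) = dd i) :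
    ∃ g : ℕ → Polynomial ℤ,
      (∀ q : ℕ, 0 < q → (kerCard A q : ℤ) = (g (Nat.gcd er q)).eval (q : ℤ)) ∧
      (∀ q : ℕ, 0 < q →
        (kerCard A q : ℤ) =
          (∏ i : Fin ℓ, if (i : ℕ) < r then (Int.gcd (dd i) (q : ℤ) : ℤ) else 1)
            * (q : ℤ) ^ (ℓ - r)) := by
  have key : ∀ q : ℕ, 0 < q → (kerCard A q : ℤ) =
      (∏ i : Fin ℓ, if (i : ℕ) < r then (Int.gcd (dd i) (q : ℤ) : ℤ) else 1)
        * (q : ℤ) ^ (ℓ - r) := by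
    intro q hq
    have h1 : kerCard A q = ∏ i : Fin ℓ, Int.gcd (dd i) (q : ℤ) := by
      rw [kerCard, ← card_ker_unimodular ℓ q A S T hS hT, hSNF,
        card_ker_diagonal ℓ q hq dd]
    rw [h1]
    push_cast
    have hsplit : ∀ i : Fin ℓ, ((Int.gcd (dd i) (q : ℤ) : ℤ)) =
        (if (i : ℕ) < r then (Int.gcd (dd i) (q : ℤ) : ℤ) else 1) *
          (if (i : ℕ) < r then 1 else (q : ℤ)) := by
      intro i
      by_cases h : (i : ℕ) < r
      · simp [h]
      · simp [h, hzero i (le_of_not_gt h)]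
    rw [Finset.prod_congr rfl (fun i _ => hsplit i), Finset.prod_mul_distrib]
    congr 1
    rw [Fin.prod_univ_eq_prod_range (fun i => if i < r then (1 : ℤ) else (q : ℤ)) ℓ,
      Finset.range_eq_Ico, ← Finset.prod_Ico_consecutive _ (Nat.zero_le r) hr]
    have h2 : ∏ i ∈ Finset.Ico 0 r, (if i < r then (1 : ℤ) else (q : ℤ)) = 1 :=
      Finset.prod_eq_one fun i hi => by simp [(Finset.mem_Ico.mp hi).2]
    have h3 : ∏ i ∈ Finset.Ico r ℓ, (if i < r then (1 : ℤ) else (q : ℤ)) = (q : ℤ) ^ (ℓ - r) := by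
      have hc : ∀ i ∈ Finset.Ico r ℓ, (if i < r then (1 : ℤ) else (q : ℤ)) = (q : ℤ) :=
        fun i hi => by simp [Nat.not_lt.mpr (Finset.mem_Ico.mp hi).1]
      rw [Finset.prod_congr rfl hc, Finset.prod_const, Nat.card_Ico]
    rw [h2, h3, one_mul]
  refine ⟨fun d => Polynomial.C (∏ i : Fin ℓ,
      if (i : ℕ) < r then (Int.gcd (dd i) (d : ℤ) : ℤ) else 1) * Polynomial.X ^ (ℓ - r),
    ?_, key⟩
  intro q hq
  rw [key q hq]
  simp only [Polynomial.eval_mul, Polynomial.eval_C, Polynomial.eval_pow, Polynomial.eval_X]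
  congr 1
  refine Finset.prod_congr rfl fun i _ => ?_
  by_cases hi : (i : ℕ) < r
  · simp only [hi, if_true]
    have hdd : dd i ∣ (er : ℤ) := by
      rcases her with ⟨hr0, _⟩ | ⟨j, hj1, hj2⟩
      · omega
      · rw [hj2]
        exact hdvd i j (Fin.le_def.mpr (by omega)) (by omega)
    have hna : (dd i).natAbs ∣ er := by
      have := Int.natAbs_dvd_natAbs.mpr hdd
      simpa using this
    have : Nat.gcd (dd i).natAbs q = Nat.gcd (dd i).natAbs (Nat.gcd er q) := by
      rw [← Nat.gcd_assoc, Nat.gcd_eq_left hna]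
    simp only [Int.gcd, Int.natAbs_natCast]
    exact_mod_cast congrArg (Nat.cast : ℕ → ℤ) this
  · simp [hi]
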